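/- In the situation below (M free of rank d over K⟨φ⟩ with ρ-action matrix D, and J a Janet basis for ⟨p_1,…,p_d⟩), the image pr(W_ind) is a maximal K⟨ρ⟩-linearly independent subset of M; that is: (a) the family (S^l(pr(w)))_{w ∈ W_ind, l ≥ 0} is K-linearly independent, and (b) for every f ∈ M there exist a nonzero polynomial q = Σ_l x_l ρ^l ∈ K⟨ρ⟩ and polynomials q_w ∈ K⟨ρ⟩ (w ∈ W_ind, only finitely many nonzero) such that Σ_l x_l·S^l(f) = Σ_{w ∈ W_ind} q_w·pr(w) in M (where q_w acts via S on pr(w)). -/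

import Mathlib

/-!
Common setup: the skew polynomial ring `D = K{φ,ρ}` (with commuting endomorphisms
`γφ, γρ : K → K`, `φ·x = γφ(x)·φ`, `ρ·x = γρ(x)·ρ`), the free left `D`-module
`𝓕 = ⊕_{i=1}^d D κ_i`, its monomials `φ^k ρ^j κ_i`, the monomial order, cones,
Janet bases, and the data attached to a `D`-module `M` that is free over `K⟨φ⟩`.

`𝓕` is realized concretely as finitely supported coefficient functions on the
set of monomial indices `(i, k, j) ↔ φ^k ρ^j κ_i`; multiplication by `φ` resp. `ρ`
is the K-semilinear shift operator `PhiMul` resp. `RhoMul`.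
-/

namespace JanetSetup

/-- Index of a monomial `φ^k ρ^j κ_i` of `𝓕`: the triple `(i, k, j)`. -/
abbrev MonIx (d : ℕ) := Fin d × ℕ × ℕ

/-- The free module `𝓕 = ⊕_{i=1}^d D κ_i`, as coefficient functions on monomials. -/
abbrev Fr (K : Type) [Field K] (d : ℕ) : Type := MonIx d →₀ K

variable {K : Type} [Field K] {d : ℕ}

/-- Left multiplication by the variable `φ` on `𝓕`. -/
noncomputable def PhiMul (γφ : K →+* K) (f : Fr K d) : Fr K d :=
  Finsupp.mapDomain (fun m => (m.1, m.2.1 + 1, m.2.2))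
    (Finsupp.mapRange (fun x => γφ x) (map_zero γφ) f)

/-- Left multiplication by the variable `ρ` on `𝓕`. -/
noncomputable def RhoMul (γρ : K →+* K) (f : Fr K d) : Fr K d :=
  Finsupp.mapDomain (fun m => (m.1, m.2.1, m.2.2 + 1))
    (Finsupp.mapRange (fun x => γρ x) (map_zero γρ) f)

/-- The left `D`-submodule of `𝓕` generated by a set `s` (as a `K`-subspace:
the `K`-span of all `φ^k ρ^j g`, `g ∈ s`). -/
noncomputable def DSpan (γφ γρ : K →+* K) (s : Set (Fr K d)) : Submodule K (Fr K d) :=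
  Submodule.span K
    {x | ∃ (k j : ℕ) (g : Fr K d), g ∈ s ∧ x = (PhiMul γφ)^[k] ((RhoMul γρ)^[j] g)}

/-- The monomial order: lexicographic with `ρ ≺ φ`, position-over-term with
`κ_{i₁} ≻ κ_{i₂}` for `i₁ < i₂`. -/
def MLt (a b : MonIx d) : Prop :=
  b.1 < a.1 ∨ (a.1 = b.1 ∧ (a.2.1 < b.2.1 ∨ (a.2.1 = b.2.1 ∧ a.2.2 < b.2.2)))

/-- `m` is the leading monomial of `f`. -/
def IsLm (f : Fr K d) (m : MonIx d) : Prop :=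
  m ∈ f.support ∧ ∀ m' ∈ f.support, m' ≠ m → MLt m' m

/-- The `μ`-cone of a monomial `m`; `μ = (φ ∈ μ, ρ ∈ μ)` as a pair of Booleans. -/
def Cone (μ : Bool × Bool) (m : MonIx d) : Set (MonIx d) :=
  {x | ∃ a b : ℕ, (μ.1 = true ∨ a = 0) ∧ (μ.2 = true ∨ b = 0) ∧
      x = (m.1, m.2.1 + a, m.2.2 + b)}

/-- A Janet basis `{(b_1,μ_1),…,(b_r,μ_r)}` for the submodule `N ⊆ 𝓕`:
the `b_i` generate `N` as a left `D`-module and the set of leading monomials of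
nonzero elements of `N` is the disjoint union of the cones `Mon(μ_i)·lm(b_i)`. -/
structure JanetBasis (γφ γρ : K →+* K) (d : ℕ) (N : Submodule K (Fr K d)) where
  r : ℕ
  b : Fin r → Fr K d
  μ : Fin r → Bool × Bool
  /-- the leading monomial of `b i` -/
  lmb : Fin r → MonIx d
  b_ne : ∀ i, b i ≠ 0
  b_lm : ∀ i, IsLm (b i) (lmb i)
  pair_inj : Function.Injective fun i => (b i, μ i)
  span_eq : DSpan γφ γρ (Set.range b) = N
  lm_cover : ∀ f ∈ N, f ≠ 0 → ∀ m, IsLm f m → ∃ i, m ∈ Cone (μ i) (lmb i)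
  cone_lm : ∀ i, ∀ m ∈ Cone (μ i) (lmb i), ∃ f ∈ N, f ≠ 0 ∧ IsLm f m
  disj : ∀ i i' m, m ∈ Cone (μ i) (lmb i) → m ∈ Cone (μ i') (lmb i') → i = i'

variable (γφ γρ : K →+* K)

/-- `f` is reduced (in normal form) w.r.t. the pairs of `J` indexed by `P`:
no monomial of `f` lies in one of the corresponding cones. -/
def IsReduced {N : Submodule K (Fr K d)} (J : JanetBasis γφ γρ d N)
    (P : Set (Fin J.r)) (f : Fr K d) : Prop :=
  ∀ m ∈ f.support, ∀ i ∈ P, m ∉ Cone (J.μ i) (J.lmb i)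

/-- `h` is the normal form `NF(g, ·)` of `g` with respect to the pairs of `J`
indexed by `P`: the reduction process subtracts left multiples of the `b i`
(`i ∈ P`), so `g - h` lies in the `D`-span of these, and the result is reduced. -/
def IsNFOf {N : Submodule K (Fr K d)} (J : JanetBasis γφ γρ d N)
    (P : Set (Fin J.r)) (g h : Fr K d) : Prop :=
  g - h ∈ DSpan γφ γρ (J.b '' P) ∧ IsReduced γφ γρ J P h

/-- The projection `pr : 𝓕 → M`, `φ^k ρ^j κ_i ↦ F^k S^j κ̄_i`, for a `D`-module `M`
with `φ`-action `F`, `ρ`-action `S` and distinguished elements `κb i = κ̄_i`. -/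
noncomputable def pr {M : Type} [AddCommGroup M] [Module K M]
    (F S : M →+ M) (κb : Fin d → M) (f : Fr K d) : M :=
  f.sum fun m x => x • F^[m.2.1] (S^[m.2.2] (κb m.1))

/-- The relation `p_i = ρ κ_i − Σ_j D_{ij} κ_j ∈ 𝓕`, where the entry `D_{ij} ∈ K⟨φ⟩`
is recorded as the finitely supported coefficient function of its powers of `φ`. -/
noncomputable def pelt (Dmat : Fin d → Fin d → (ℕ →₀ K)) (i : Fin d) : Fr K d :=
  Finsupp.single (i, 0, 1) (1 : K)
    - ∑ j : Fin d, (Dmat i j).sum fun k x => Finsupp.single (j, k, 0) x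

/-- `n_i = inf{n | ∃ (b,μ) ∈ J, lm(b) = φ^n κ_i} ∈ ℕ∪{∞}`. -/
noncomputable def nVal {N : Submodule K (Fr K d)} (J : JanetBasis γφ γρ d N)
    (i : Fin d) : ℕ∞ :=
  sInf {c : ℕ∞ | ∃ n : ℕ, c = n ∧ ∃ ix, J.lmb ix = (i, n, 0)}

/-- `m_i = inf{n | ∃ (b,μ) ∈ J, ∃ l ≥ 0, lm(b) = φ^n ρ^l κ_i} ∈ ℕ∪{∞}`. -/
noncomputable def mVal {N : Submodule K (Fr K d)} (J : JanetBasis γφ γρ d N)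
    (i : Fin d) : ℕ∞ :=
  sInf {c : ℕ∞ | ∃ n : ℕ, c = n ∧ ∃ ix l, J.lmb ix = (i, n, l)}

/-- `W_gen = {φ^j κ_i | 1 ≤ i ≤ d, 0 ≤ j < n_i} ⊆ 𝓕`. -/
def Wgen {N : Submodule K (Fr K d)} (J : JanetBasis γφ γρ d N) : Set (Fr K d) :=
  {w | ∃ (i : Fin d) (j : ℕ), (j : ℕ∞) < nVal γφ γρ J i ∧
      w = Finsupp.single (i, j, 0) (1 : K)}

/-- `W_ind = {φ^j κ_i | 1 ≤ i ≤ d, 0 ≤ j < m_i} ⊆ 𝓕`. -/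
def Wind {N : Submodule K (Fr K d)} (J : JanetBasis γφ γρ d N) : Set (Fr K d) :=
  {w | ∃ (i : Fin d) (j : ℕ), (j : ℕ∞) < mVal γφ γρ J i ∧
      w = Finsupp.single (i, j, 0) (1 : K)}

end JanetSetup

open JanetSetup

namespace JanetAux
open JanetSetup Finsupp

section iter
variable {α : Type*} [AddCommGroup α] {Φ : α → α}

lemma iter_zero (h : ∀ a b, Φ (a+b) = Φ a + Φ b) (k : ℕ) : Φ^[k] 0 = 0 := by
  have h0 : Φ 0 = 0 := by
    have h1 := h 0 0
    simp only [add_zero] at h1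
    exact (left_eq_add.mp h1)
  induction k with
  | zero => rfl
  | succ n ih => rw [Function.iterate_succ_apply, h0, ih]

lemma iter_add (h : ∀ a b, Φ (a+b) = Φ a + Φ b) (k : ℕ) (a b : α) :
    Φ^[k] (a + b) = Φ^[k] a + Φ^[k] b := by
  induction k generalizing a b with
  | zero => rfl
  | succ n ih => rw [Function.iterate_succ_apply, h, ih,
      ← Function.iterate_succ_apply, ← Function.iterate_succ_apply]

lemma iter_sub (h : ∀ a b, Φ (a+b) = Φ a + Φ b) (k : ℕ) (a b : α) :
    Φ^[k] (a - b) = Φ^[k] a - Φ^[k] b := by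
  have hb : Φ^[k] (a - b) + Φ^[k] b = Φ^[k] a := by
    rw [← iter_add h, sub_add_cancel]
  exact eq_sub_of_add_eq hb

lemma iter_sum (h : ∀ a b, Φ (a+b) = Φ a + Φ b) (k : ℕ) {ι : Type*} (s : Finset ι)
    (v : ι → α) : Φ^[k] (∑ i ∈ s, v i) = ∑ i ∈ s, Φ^[k] (v i) := by
  classical
  induction s using Finset.induction with
  | empty => simpa using iter_zero h k
  | insert _ _ hx ih => rw [Finset.sum_insert hx, iter_add h, ih, Finset.sum_insert hx]

variable {K : Type} [Field K] [Module K α] {γ : K →+* K}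

lemma iter_smul (h : ∀ (x : K) a, Φ (x • a) = γ x • Φ a) (k : ℕ) (x : K) (a : α) :
    Φ^[k] (x • a) = γ^[k]  x • Φ^[k] a := by
  induction k generalizing x a with
  | zero => rfl
  | succ n ih => rw [Function.iterate_succ_apply, h, ih, Function.iterate_succ_apply,
      ← Function.iterate_succ_apply, ← Function.iterate_succ_apply]

end iter

variable {K : Type} [Field K] {d : ℕ} (γφ γρ : K →+* K)

lemma rh_iter_one (γ : K →+* K) (k : ℕ) : γ^[k] (1 : K) = 1 := by
  induction k with
  | zero => rfl
  | succ n ih => rw [Function.iterate_succ_apply, map_one, ih]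

lemma rh_iter_inj (γ : K →+* K) (k : ℕ) : Function.Injective (γ^[k] : K → K) :=
  Function.Injective.iterate γ.injective k

lemma rh_iter_map_zero (γ : K →+* K) (k : ℕ) : γ^[k] (0 : K) = 0 := by
  induction k with
  | zero => rfl
  | succ n ih => rw [Function.iterate_succ_apply, map_zero, ih]

lemma rh_iter_ne_zero (γ : K →+* K) (k : ℕ) {x : K} (hx : x ≠ 0) : γ^[k] x ≠ 0 := by
  intro h
  apply hx
  apply rh_iter_inj γ k
  rw [h, rh_iter_map_zero]

-- basic PhiMul/RhoMul lemmas
lemma phiMul_single (i : Fin d) (k j : ℕ) (x : K) :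
    PhiMul γφ (Finsupp.single (i,k,j) x) = Finsupp.single (i,k+1,j) (γφ x) := by
  unfold PhiMul
  rw [Finsupp.mapRange_single, Finsupp.mapDomain_single]

lemma rhoMul_single (i : Fin d) (k j : ℕ) (x : K) :
    RhoMul γρ (Finsupp.single (i,k,j) x) = Finsupp.single (i,k,j+1) (γρ x) := by
  unfold RhoMul
  rw [Finsupp.mapRange_single, Finsupp.mapDomain_single]

lemma phiMul_add (f g : Fr K d) : PhiMul γφ (f+g) = PhiMul γφ f + PhiMul γφ g := by
  unfold PhiMul
  rw [Finsupp.mapRange_add (map_add γφ), Finsupp.mapDomain_add]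

lemma rhoMul_add (f g : Fr K d) : RhoMul γρ (f+g) = RhoMul γρ f + RhoMul γρ g := by
  unfold RhoMul
  rw [Finsupp.mapRange_add (map_add γρ), Finsupp.mapDomain_add]

lemma phiMul_smul (x : K) (f : Fr K d) : PhiMul γφ (x • f) = γφ x • PhiMul γφ f := by
  unfold PhiMul
  have : Finsupp.mapRange (fun y => γφ y) (map_zero γφ) (x • f)
      = γφ x • Finsupp.mapRange (fun y => γφ y) (map_zero γφ) f := by
    ext m
    simp [Finsupp.mapRange_apply, map_mul]
  rw [this, Finsupp.mapDomain_smul]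

lemma rhoMul_smul (x : K) (f : Fr K d) : RhoMul γρ (x • f) = γρ x • RhoMul γρ f := by
  unfold RhoMul
  have : Finsupp.mapRange (fun y => γρ y) (map_zero γρ) (x • f)
      = γρ x • Finsupp.mapRange (fun y => γρ y) (map_zero γρ) f := by
    ext m
    simp [Finsupp.mapRange_apply, map_mul]
  rw [this, Finsupp.mapDomain_smul]

lemma phiMul_iter_single (a : ℕ) (i : Fin d) (k j : ℕ) (x : K) :
    (PhiMul γφ)^[a] (Finsupp.single (i,k,j) x) = Finsupp.single (i,k+a,j) (γφ^[a] x) := by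
  induction a with
  | zero => rfl
  | succ n ih =>
      rw [Function.iterate_succ_apply', ih, phiMul_single, Function.iterate_succ_apply']
      ring_nf

lemma rhoMul_iter_single (a : ℕ) (i : Fin d) (k j : ℕ) (x : K) :
    (RhoMul γρ)^[a] (Finsupp.single (i,k,j) x) = Finsupp.single (i,k,j+a) (γρ^[a] x) := by
  induction a with
  | zero => rfl
  | succ n ih =>
      rw [Function.iterate_succ_apply', ih, rhoMul_single, Function.iterate_succ_apply']
      ring_nf

-- support of PhiMul
lemma support_phiMul (f : Fr K d) :
    (PhiMul γφ f).support = f.support.image (fun m => (m.1, m.2.1 + 1, m.2.2)) := by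
  unfold PhiMul
  have hinj : Function.Injective (fun m : MonIx d => (m.1, m.2.1 + 1, m.2.2)) := by
    intro a b h
    simp only [Prod.mk.injEq] at h
    obtain ⟨h1, h2, h3⟩ := h
    exact Prod.ext h1 (Prod.ext (by omega) h3)
  rw [Finsupp.mapDomain_support_of_injective hinj,
    Finsupp.support_mapRange_of_injective (map_zero γφ) f γφ.injective]

lemma mlt_phiShift {a b : MonIx d} (h : MLt a b) :
    MLt (a.1, a.2.1 + 1, a.2.2) (b.1, b.2.1 + 1, b.2.2) := by
  obtain ⟨i1, k1, j1⟩ := a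
  obtain ⟨i2, k2, j2⟩ := b
  unfold MLt at *
  dsimp only at *
  rcases h with h | ⟨h1, h2 | ⟨h2, h3⟩⟩
  · exact Or.inl h
  · exact Or.inr ⟨h1, Or.inl (by omega)⟩
  · exact Or.inr ⟨h1, Or.inr ⟨by omega, h3⟩⟩

lemma isLm_phiMul {f : Fr K d} {m : MonIx d} (h : IsLm f m) :
    IsLm (PhiMul γφ f) (m.1, m.2.1 + 1, m.2.2) := by
  obtain ⟨hmem, hmax⟩ := h
  constructor
  · rw [support_phiMul]
    exact Finset.mem_image_of_mem _ hmem
  · intro m' hm' hne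
    rw [support_phiMul] at hm'
    obtain ⟨m0, hm0, rfl⟩ := Finset.mem_image.mp hm'
    have : m0 ≠ m := by
      rintro rfl; exact hne rfl
    exact mlt_phiShift (hmax m0 hm0 this)

lemma isLm_phiMul_iter {f : Fr K d} {m : MonIx d} (h : IsLm f m) (a : ℕ) :
    IsLm ((PhiMul γφ)^[a] f) (m.1, m.2.1 + a, m.2.2) := by
  induction a with
  | zero => simpa using h
  | succ n ih =>
      rw [Function.iterate_succ_apply']
      have := isLm_phiMul γφ ih
      simpa [add_assoc] using this

-- MLt is a strict linear order on MonIx d: trichotomy and existence of max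
lemma mlt_trichotomy (a b : MonIx d) : a = b ∨ MLt a b ∨ MLt b a := by
  obtain ⟨i1, k1, j1⟩ := a
  obtain ⟨i2, k2, j2⟩ := b
  unfold MLt
  simp only [Prod.mk.injEq]
  rcases lt_trichotomy i1 i2 with h | h | h
  · right; right; left; exact h
  · rcases lt_trichotomy k1 k2 with h2 | h2 | h2
    · right; left; exact Or.inr ⟨h, Or.inl h2⟩
    · rcases lt_trichotomy j1 j2 with h3 | h3 | h3
      · right; left; exact Or.inr ⟨h, Or.inr ⟨h2, h3⟩⟩
      · left; exact ⟨h, h2, h3⟩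
      · right; right; exact Or.inr ⟨h.symm, Or.inr ⟨h2.symm, h3⟩⟩
    · right; right; exact Or.inr ⟨h.symm, Or.inl h2⟩
  · right; left; left; exact h

lemma mlt_irrefl (a : MonIx d) : ¬ MLt a a := by
  rintro (h | ⟨-, h | ⟨-, h⟩⟩) <;> exact lt_irrefl _ h

/-- embedding of the monomials into a lex order realizing `MLt`. -/
def psi (d : ℕ) (m : MonIx d) : ℕ ×ₗ (ℕ ×ₗ ℕ) := toLex (d - 1 - m.1.val, toLex (m.2.1, m.2.2))

lemma psi_lt_iff {a b : MonIx d} : psi d a < psi d b ↔ MLt a b := by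
  obtain ⟨⟨i1, hi1⟩, k1, j1⟩ := a
  obtain ⟨⟨i2, hi2⟩, k2, j2⟩ := b
  unfold psi MLt
  rw [Prod.Lex.lt_iff, Prod.Lex.lt_iff]
  simp only [Fin.mk_lt_mk, Fin.mk.injEq, Prod.mk.injEq, ofLex_toLex]
  constructor
  · rintro (h | ⟨h, h2 | ⟨h2, h3⟩⟩)
    · left; omega
    · right; exact ⟨by omega, Or.inl h2⟩
    · right; exact ⟨by omega, Or.inr ⟨h2, h3⟩⟩
  · rintro (h | ⟨h, h2 | ⟨h2, h3⟩⟩)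
    · left; omega
    · right; exact ⟨by omega, Or.inl h2⟩
    · right; exact ⟨by omega, Or.inr ⟨h2, h3⟩⟩

lemma psi_inj : Function.Injective (psi d) := by
  intro a b h
  unfold psi at h
  have h1 := congrArg (fun z => (ofLex z).1) h
  have h2 := congrArg (fun z => (ofLex (ofLex z).2).1) h
  have h3 := congrArg (fun z => (ofLex (ofLex z).2).2) h
  simp only [ofLex_toLex] at h1 h2 h3
  obtain ⟨⟨i1, hi1⟩, k1, j1⟩ := a
  obtain ⟨⟨i2, hi2⟩, k2, j2⟩ := b
  dsimp at h1 h2 h3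
  simp only [Fin.mk.injEq, Prod.mk.injEq]
  exact ⟨by omega, h2, h3⟩

lemma exists_isLm {f : Fr K d} (hf : f ≠ 0) : ∃ m, IsLm f m := by
  have hne : f.support.Nonempty := Finsupp.support_nonempty_iff.mpr hf
  obtain ⟨m, hm, hmax⟩ := Finset.exists_max_image f.support (psi d) hne
  refine ⟨m, hm, fun m' hm' hne' => ?_⟩
  rw [← psi_lt_iff]
  exact lt_of_le_of_ne (hmax m' hm') (fun h => hne' (psi_inj h))

section stage2
variable {K : Type} [Field K] {d : ℕ} (γφ γρ : K →+* K)

lemma phiMul_zero : PhiMul γφ (0 : Fr K d) = 0 := by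
  unfold PhiMul
  rw [Finsupp.mapRange_zero, Finsupp.mapDomain_zero]

lemma rhoMul_zero : RhoMul γρ (0 : Fr K d) = 0 := by
  unfold RhoMul
  rw [Finsupp.mapRange_zero, Finsupp.mapDomain_zero]

variable {M : Type} [AddCommGroup M] [Module K M] (F S : M →+ M) (κb : Fin d → M)

/-- the values of the basis monomials in `M`. -/
def vfun : MonIx d → M := fun m => F^[m.2.1] (S^[m.2.2] (κb m.1))

/-- `pr` as a linear map. -/
noncomputable def prL : Fr K d →ₗ[K] M := Finsupp.linearCombination K (vfun F S κb)

lemma pr_eq (f : Fr K d) : pr F S κb f = prL F S κb f := by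
  unfold pr prL
  rw [Finsupp.linearCombination_apply]
  rfl

lemma prL_single (m : MonIx d) (x : K) :
    prL F S κb (Finsupp.single m x) = x • vfun F S κb m := by
  simp [prL, Finsupp.linearCombination_single]

section semilinear

lemma S_iterF (hFS : ∀ m : M, F (S m) = S (F m)) (k : ℕ) (y : M) :
    S (F^[k] y) = F^[k] (S y) := by
  induction k generalizing y with
  | zero => rfl
  | succ n ih => rw [Function.iterate_succ_apply', Function.iterate_succ_apply', ← hFS, ih]

lemma prL_phiMul (hF : ∀ (x : K) (m : M), F (x • m) = γφ x • F m) (f : Fr K d) :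
    prL F S κb (PhiMul γφ f) = F (prL F S κb f) := by
  induction f using Finsupp.induction_linear with
  | zero => rw [phiMul_zero, map_zero, map_zero]
  | add f g hf hg => rw [phiMul_add, map_add, map_add, hf, hg, map_add]
  | single m x =>
      obtain ⟨i, k, j⟩ := m
      rw [phiMul_single, prL_single, prL_single, hF]
      unfold vfun
      rw [Function.iterate_succ_apply']

lemma prL_rhoMul (hS : ∀ (x : K) (m : M), S (x • m) = γρ x • S m)
    (hFS : ∀ m : M, F (S m) = S (F m)) (f : Fr K d) :
    prL F S κb (RhoMul γρ f) = S (prL F S κb f) := by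
  induction f using Finsupp.induction_linear with
  | zero => rw [rhoMul_zero, map_zero, map_zero]
  | add f g hf hg => rw [rhoMul_add, map_add, map_add, hf, hg, map_add]
  | single m x =>
      obtain ⟨i, k, j⟩ := m
      rw [rhoMul_single, prL_single, prL_single, hS]
      unfold vfun
      rw [S_iterF F S hFS, Function.iterate_succ_apply']

lemma prL_phiMul_iter (hF : ∀ (x : K) (m : M), F (x • m) = γφ x • F m) (a : ℕ) (f : Fr K d) :
    prL F S κb ((PhiMul γφ)^[a] f) = F^[a] (prL F S κb f) := by
  induction a generalizing f with
  | zero => rfl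
  | succ n ih =>
      rw [Function.iterate_succ_apply', Function.iterate_succ_apply',
        prL_phiMul γφ F S κb hF _, ih]

lemma prL_rhoMul_iter (hS : ∀ (x : K) (m : M), S (x • m) = γρ x • S m)
    (hFS : ∀ m : M, F (S m) = S (F m)) (a : ℕ) (f : Fr K d) :
    prL F S κb ((RhoMul γρ)^[a] f) = S^[a] (prL F S κb f) := by
  induction a generalizing f with
  | zero => rfl
  | succ n ih =>
      rw [Function.iterate_succ_apply', Function.iterate_succ_apply',
        prL_rhoMul γρ F S κb hS hFS _, ih]

lemma prL_pelt (Dmat : Fin d → Fin d → (ℕ →₀ K))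
    (hact : ∀ i, S (κb i) = ∑ j : Fin d, (Dmat i j).sum fun k x => x • F^[k] (κb j))
    (i : Fin d) : prL F S κb (pelt Dmat i) = 0 := by
  unfold pelt
  rw [map_sub, prL_single, map_sum]
  have h1 : (1:K) • vfun F S κb (i, 0, 1) = S (κb i) := by
    unfold vfun; simp
  rw [h1, hact]
  rw [sub_eq_zero]
  apply Finset.sum_congr rfl
  intro j _
  rw [Finsupp.sum, Finsupp.sum, map_sum]
  apply Finset.sum_congr rfl
  intro k _
  rw [prL_single]
  rfl

lemma N_le_ker (hF : ∀ (x : K) (m : M), F (x • m) = γφ x • F m)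
    (hS : ∀ (x : K) (m : M), S (x • m) = γρ x • S m)
    (hFS : ∀ m : M, F (S m) = S (F m))
    (Dmat : Fin d → Fin d → (ℕ →₀ K))
    (hact : ∀ i, S (κb i) = ∑ j : Fin d, (Dmat i j).sum fun k x => x • F^[k] (κb j)) :
    DSpan γφ γρ (Set.range (pelt Dmat)) ≤ LinearMap.ker (prL F S κb) := by
  rw [DSpan, Submodule.span_le]
  rintro x ⟨k, j, g, ⟨i, rfl⟩, rfl⟩
  rw [SetLike.mem_coe, LinearMap.mem_ker,
    prL_phiMul_iter γφ F S κb hF, prL_rhoMul_iter γρ F S κb hS hFS,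
    prL_pelt F S κb Dmat hact]
  rw [iter_zero (map_add S), iter_zero (map_add F)]

end semilinear

lemma dspan_phiMul_mem {s : Set (Fr K d)} {f : Fr K d} (hf : f ∈ DSpan γφ γρ s) :
    PhiMul γφ f ∈ DSpan γφ γρ s := by
  induction hf using Submodule.span_induction with
  | mem x hx =>
      obtain ⟨k, j, g, hg, rfl⟩ := hx
      apply Submodule.subset_span
      exact ⟨k + 1, j, g, hg, by rw [Function.iterate_succ_apply']⟩
  | zero => rw [phiMul_zero]; exact Submodule.zero_mem _
  | add x y _ _ hx hy => rw [phiMul_add]; exact Submodule.add_mem _ hx hy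
  | smul a x _ hx => rw [phiMul_smul]; exact Submodule.smul_mem _ _ hx

lemma dspan_phiMul_iter_mem {s : Set (Fr K d)} {f : Fr K d} (hf : f ∈ DSpan γφ γρ s)
    (a : ℕ) : (PhiMul γφ)^[a] f ∈ DSpan γφ γρ s := by
  induction a with
  | zero => exact hf
  | succ n ih => rw [Function.iterate_succ_apply']; exact dspan_phiMul_mem γφ γρ ih

lemma self_mem_dspan {s : Set (Fr K d)} {f : Fr K d} (hf : f ∈ s) : f ∈ DSpan γφ γρ s :=
  Submodule.subset_span ⟨0, 0, f, hf, rfl⟩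

/-- subspace of elements of `ρ`-degree zero. -/
noncomputable def Zsub (K : Type) [Field K] (d : ℕ) : Submodule K (Fr K d) :=
  Finsupp.supported K K {m : MonIx d | m.2.2 = 0}

lemma single_mem_NZ (Dmat : Fin d → Fin d → (ℕ →₀ K)) :
    ∀ (j : ℕ) (i : Fin d) (k : ℕ) (x : K),
      Finsupp.single (i,k,j) x ∈ DSpan γφ γρ (Set.range (pelt Dmat)) ⊔ Zsub K d := by
  intro j
  induction j with
  | zero =>
      intro i k x
      exact Submodule.mem_sup_right (Finsupp.single_mem_supported K x rfl)
  | succ j ih =>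
      intro i k x
      set N := DSpan γφ γρ (Set.range (pelt Dmat)) with hN
      have hA : (PhiMul γφ)^[k] ((RhoMul γρ)^[j] (pelt Dmat i))
          = Finsupp.single (i,k,j+1) 1
            - ∑ j' : Fin d, ∑ k' ∈ (Dmat i j').support,
                Finsupp.single (j', k' + k, j) (γφ^[k] (γρ^[j] (Dmat i j' k'))) := by
        unfold pelt
        rw [iter_sub (rhoMul_add γρ), iter_sub (phiMul_add γφ),
          rhoMul_iter_single, phiMul_iter_single, rh_iter_one, rh_iter_one]
        congr 1
        · rw [Nat.add_comm 1 j]; norm_num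
        · rw [iter_sum (rhoMul_add γρ), iter_sum (phiMul_add γφ)]
          apply Finset.sum_congr rfl
          intro j' _
          rw [Finsupp.sum, iter_sum (rhoMul_add γρ), iter_sum (phiMul_add γφ)]
          apply Finset.sum_congr rfl
          intro k' _
          rw [rhoMul_iter_single, phiMul_iter_single]
          norm_num
      have key : Finsupp.single (i,k,j+1) x
          = x • (PhiMul γφ)^[k] ((RhoMul γρ)^[j] (pelt Dmat i))
            + ∑ j' : Fin d, ∑ k' ∈ (Dmat i j').support,
                Finsupp.single (j', k' + k, j) (x * γφ^[k] (γρ^[j] (Dmat i j' k'))) := by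
        rw [hA, smul_sub, Finsupp.smul_single, smul_eq_mul, mul_one]
        rw [Finset.smul_sum]
        have : ∀ j' : Fin d, x • ∑ k' ∈ (Dmat i j').support,
            Finsupp.single (j', k' + k, j) (γφ^[k] (γρ^[j] (Dmat i j' k')))
            = ∑ k' ∈ (Dmat i j').support,
                Finsupp.single (j', k' + k, j) (x * γφ^[k] (γρ^[j] (Dmat i j' k'))) := by
          intro j'
          rw [Finset.smul_sum]
          apply Finset.sum_congr rfl
          intro k' _
          rw [Finsupp.smul_single, smul_eq_mul]
        rw [Finset.sum_congr rfl (fun j' _ => this j')]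
        abel
      rw [key]
      apply Submodule.add_mem
      · apply Submodule.mem_sup_left
        apply Submodule.smul_mem
        exact Submodule.subset_span ⟨k, j, pelt Dmat i, ⟨i, rfl⟩, rfl⟩
      · apply Submodule.sum_mem
        intro j' _
        apply Submodule.sum_mem
        intro k' _
        exact ih j' (k' + k) _

lemma all_mem_NZ (Dmat : Fin d → Fin d → (ℕ →₀ K)) (f : Fr K d) :
    f ∈ DSpan γφ γρ (Set.range (pelt Dmat)) ⊔ Zsub K d := by
  induction f using Finsupp.induction with
  | zero => exact Submodule.zero_mem _
  | single_add m x f _ _ ih =>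
      obtain ⟨i, k, j⟩ := m
      exact Submodule.add_mem _ (single_mem_NZ γφ γρ Dmat j i k x) ih

end stage2

section stage3
variable {K : Type} [Field K] {d : ℕ} (γφ γρ : K →+* K)
variable {M : Type} [AddCommGroup M] [Module K M] (F S : M →+ M) (κb : Fin d → M)

lemma e0_inj : Function.Injective (fun p : Fin d × ℕ => ((p.1, p.2, 0) : MonIx d)) := by
  intro a b h
  simp only [Prod.mk.injEq] at h
  exact Prod.ext h.1 h.2.1

set_option maxHeartbeats 1000000 in
lemma mem_N_of_prL_eq_zero
    (hF : ∀ (x : K) (m : M), F (x • m) = γφ x • F m)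
    (hS : ∀ (x : K) (m : M), S (x • m) = γρ x • S m)
    (hFS : ∀ m : M, F (S m) = S (F m))
    (Dmat : Fin d → Fin d → (ℕ →₀ K))
    (hact : ∀ i, S (κb i) = ∑ j : Fin d, (Dmat i j).sum fun k x => x • F^[k] (κb j))
    (hli : LinearIndependent K fun p : Fin d × ℕ => F^[p.2] (κb p.1))
    {f : Fr K d} (hf : prL F S κb f = 0) :
    f ∈ DSpan γφ γρ (Set.range (pelt Dmat)) := by
  obtain ⟨n, hn, z, hz, rfl⟩ := Submodule.mem_sup.mp (all_mem_NZ γφ γρ Dmat f)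
  have hn0 : prL F S κb n = 0 :=
    N_le_ker γφ γρ F S κb hF hS hFS Dmat hact hn
  have hzz : prL F S κb z = 0 := by
    rw [map_add, hn0, zero_add] at hf
    exact hf
  set e : Fin d × ℕ → MonIx d := fun p => (p.1, p.2, 0) with he
  have hsub : ↑z.support ⊆ Set.range e := by
    intro m hm
    have hm' : m ∈ z.support := hm
    have := (Finsupp.mem_supported K z).mp hz hm'
    obtain ⟨i, k, j⟩ := m
    simp only [Set.mem_setOf_eq] at this
    subst this
    exact ⟨(i, k), rfl⟩
  set l := Finsupp.comapDomain e z (e0_inj).injOn with hl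
  have hmap : Finsupp.mapDomain e l = z :=
    Finsupp.mapDomain_comapDomain e e0_inj z hsub
  have hcomb : Finsupp.linearCombination K (fun p : Fin d × ℕ => F^[p.2] (κb p.1)) l = 0 := by
    have h1 : Finsupp.linearCombination K (vfun F S κb) (Finsupp.mapDomain e l)
        = Finsupp.linearCombination K (vfun F S κb ∘ e) l :=
      Finsupp.linearCombination_mapDomain K (v' := vfun F S κb) e l
    rw [hmap] at h1
    have h2 : (vfun F S κb ∘ e) = fun p : Fin d × ℕ => F^[p.2] (κb p.1) := rfl
    rw [h2] at h1
    rw [← h1]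
    exact hzz
  have hl0 : l = 0 := linearIndependent_iff.mp hli l hcomb
  have hz0 : z = 0 := by rw [← hmap, hl0, Finsupp.mapDomain_zero]
  simpa [hz0] using hn

section partB
variable (V : Submodule K M)

lemma S_iter_mem (hV : ∀ v ∈ V, S v ∈ V) (l : ℕ) {v : M} (hv : v ∈ V) : S^[l] v ∈ V := by
  induction l with
  | zero => exact hv
  | succ n ih => rw [Function.iterate_succ_apply']; exact hV _ ih

/-- "torsion modulo `V`" elements. -/
def TSet (S : M →+ M) (V : Submodule K M) : Set M :=
  {f | ∃ B : Finset M, ∀ l : ℕ, S^[l] f ∈ V ⊔ Submodule.span K (B : Set M)}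

lemma TSet_zero : (0 : M) ∈ TSet S V :=
  ⟨∅, fun l => by rw [iter_zero (map_add S)]; exact Submodule.zero_mem _⟩

lemma TSet_add {f g : M} (hf : f ∈ TSet S V) (hg : g ∈ TSet S V) : f + g ∈ TSet S V := by
  classical
  obtain ⟨B1, h1⟩ := hf
  obtain ⟨B2, h2⟩ := hg
  classical
  refine ⟨B1 ∪ B2, fun l => ?_⟩
  rw [iter_add (map_add S)]
  have e1 : V ⊔ Submodule.span K (B1 : Set M) ≤ V ⊔ Submodule.span K ((B1 ∪ B2 : Finset M) : Set M) := by
    apply sup_le_sup_left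
    apply Submodule.span_mono
    intro x hx
    simp only [Finset.coe_union, Set.mem_union]
    exact Or.inl hx
  have e2 : V ⊔ Submodule.span K (B2 : Set M) ≤ V ⊔ Submodule.span K ((B1 ∪ B2 : Finset M) : Set M) := by
    apply sup_le_sup_left
    apply Submodule.span_mono
    intro x hx
    simp only [Finset.coe_union, Set.mem_union]
    exact Or.inr hx
  exact Submodule.add_mem _ (e1 (h1 l)) (e2 (h2 l))

lemma TSet_smul (hS : ∀ (x : K) (m : M), S (x • m) = γρ x • S m)
    {f : M} (x : K) (hf : f ∈ TSet S V) : x • f ∈ TSet S V := by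
  obtain ⟨B, hB⟩ := hf
  refine ⟨B, fun l => ?_⟩
  rw [iter_smul hS]
  exact Submodule.smul_mem _ _ (hB l)

lemma TSet_S {f : M} (hf : f ∈ TSet S V) : S f ∈ TSet S V := by
  obtain ⟨B, hB⟩ := hf
  refine ⟨B, fun l => ?_⟩
  rw [← Function.iterate_succ_apply]
  exact hB (l + 1)

lemma TSet_S_iter {f : M} (hf : f ∈ TSet S V) (l : ℕ) : S^[l] f ∈ TSet S V := by
  induction l with
  | zero => exact hf
  | succ n ih => rw [Function.iterate_succ_apply']; exact TSet_S S V ih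

lemma V_le_TSet (hV : ∀ v ∈ V, S v ∈ V) {f : M} (hf : f ∈ V) : f ∈ TSet S V := by
  refine ⟨∅, fun l => ?_⟩
  exact Submodule.mem_sup_left (S_iter_mem S V hV l hf)

/-- `TSet` as a submodule. -/
noncomputable def TMod (γρ : K →+* K) (S : M →+ M)
    (hS : ∀ (x : K) (m : M), S (x • m) = γρ x • S m) (V : Submodule K M) :
    Submodule K M where
  carrier := TSet S V
  zero_mem' := TSet_zero S V
  add_mem' := TSet_add S V
  smul_mem' := fun x _ h => TSet_smul γρ S V hS x h

end partB
end stage3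

section stage4
variable {K : Type} [Field K] {d : ℕ} (γφ γρ : K →+* K)
variable {M : Type} [AddCommGroup M] [Module K M] (F S : M →+ M)

lemma iter_iter_comm (hFS : ∀ m : M, F (S m) = S (F m)) (a b : ℕ) (x : M) :
    F^[a] (S^[b] x) = S^[b] (F^[a] x) := by
  induction b generalizing x with
  | zero => rfl
  | succ n ih =>
      rw [Function.iterate_succ_apply, Function.iterate_succ_apply, ih,
        S_iterF F S hFS]

variable (V : Submodule K M)

lemma TSet_of_q (hS : ∀ (x : K) (m : M), S (x • m) = γρ x • S m)
    (f : M) (q : ℕ →₀ K) (hq : q ≠ 0)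
    (h : (q.sum fun l x => x • S^[l] f) ∈ TSet S V) : f ∈ TSet S V := by
  classical
  obtain ⟨B, hB⟩ := h
  set n := q.support.max' (Finsupp.support_nonempty_iff.mpr hq) with hn
  have hn_mem : n ∈ q.support := Finset.max'_mem _ _
  have hn_top : ∀ l ∈ q.support, l ≤ n := fun l hl => Finset.le_max' _ l hl
  have hxn : q n ≠ 0 := Finsupp.mem_support_iff.mp hn_mem
  refine ⟨B ∪ (Finset.range n).image (fun s => S^[s] f), ?_⟩
  set B' := B ∪ (Finset.range n).image (fun s => S^[s] f) with hB'
  set U := V ⊔ Submodule.span K (B' : Set M) with hU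
  have hBU : V ⊔ Submodule.span K (B : Set M) ≤ U := by
    apply sup_le_sup_left
    apply Submodule.span_mono
    intro x hx
    simp only [hB', Finset.coe_union, Set.mem_union]
    exact Or.inl hx
  have hkey : ∀ k, S^[k] (q.sum fun l x => x • S^[l] f)
      = ∑ l ∈ q.support, γρ^[k] (q l) • S^[k + l] f := by
    intro k
    rw [Finsupp.sum, iter_sum (map_add S)]
    apply Finset.sum_congr rfl
    intro l _
    rw [iter_smul hS, ← Function.iterate_add_apply]
  intro t
  induction t using Nat.strong_induction_on with
  | _ t ih =>
    by_cases ht : t < n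
    · apply Submodule.mem_sup_right
      apply Submodule.subset_span
      simp only [hB', Finset.coe_union, Set.mem_union, Finset.coe_image, Set.mem_image,
        Finset.mem_coe, Finset.mem_range]
      exact Or.inr ⟨t, ht, rfl⟩
    · push_neg at ht
      set k := t - n with hk
      have hkn : k + n = t := by omega
      have hsum : S^[k] (q.sum fun l x => x • S^[l] f) ∈ U := hBU (hB k)
      rw [hkey k, ← Finset.add_sum_erase _ _ hn_mem, hkn] at hsum
      have herase : ∑ l ∈ q.support.erase n, γρ^[k] (q l) • S^[k + l] f ∈ U := by
        apply Submodule.sum_mem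
        intro l hl
        have hl1 : l ≠ n := Finset.ne_of_mem_erase hl
        have hl2 : l ∈ q.support := Finset.mem_of_mem_erase hl
        have hl3 : k + l < t := by
          have := hn_top l hl2
          omega
        exact Submodule.smul_mem _ _ (ih _ hl3)
      have hterm : γρ^[k] (q n) • S^[t] f ∈ U := by
        have := Submodule.sub_mem _ hsum herase
        simpa using this
      have hne : γρ^[k] (q n) ≠ 0 := rh_iter_ne_zero γρ k hxn
      have := Submodule.smul_mem _ (γρ^[k] (q n))⁻¹ hterm
      rwa [smul_smul, inv_mul_cancel₀ hne, one_smul] at this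

lemma TSet_exists_q (f : M) (hf : f ∈ TSet S V) :
    ∃ q : ℕ →₀ K, q ≠ 0 ∧ (q.sum fun l x => x • S^[l] f) ∈ V := by
  classical
  obtain ⟨B, hB⟩ := hf
  set n := B.card with hn
  set mk := V.mkQ with hmk
  have hmem : ∀ k : ℕ, mk (S^[k] f) ∈ Submodule.span K (↑(B.image mk) : Set (M ⧸ V)) := by
    intro k
    obtain ⟨v, hv, b, hb, hvb⟩ := Submodule.mem_sup.mp (hB k)
    rw [← hvb, map_add]
    have h0 : mk v = 0 := (Submodule.Quotient.mk_eq_zero V).mpr hv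
    rw [h0, zero_add]
    have h1 : mk b ∈ Submodule.map mk (Submodule.span K (B : Set M)) :=
      Submodule.mem_map_of_mem hb
    rw [Submodule.map_span] at h1
    rwa [Finset.coe_image]
  have hnotli : ¬ LinearIndependent K (fun k : Fin (n+1) => mk (S^[(k : ℕ)] f)) := by
    intro hli2
    set W := Submodule.span K (↑(B.image mk) : Set (M ⧸ V)) with hW
    haveI : Module.Finite K W := Module.Finite.span_of_finite K (B.image mk).finite_toSet
    have hle : Fintype.card (Fin (n+1)) ≤ Module.finrank K W := by
      set u' : Fin (n+1) → W := fun k => ⟨mk (S^[(k : ℕ)] f), hmem k⟩ with hu'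
      have hli3 : LinearIndependent K u' := by
        apply LinearIndependent.of_comp W.subtype
        exact hli2
      exact hli3.fintype_card_le_finrank
    have hWle : Module.finrank K W ≤ n := by
      refine le_trans (finrank_span_finset_le_card (B.image mk)) ?_
      exact le_trans Finset.card_image_le (le_refl n)
    rw [Fintype.card_fin] at hle
    omega
  obtain ⟨g, hg0, k0, hk0⟩ := Fintype.not_linearIndependent_iff.mp hnotli
  set q : ℕ →₀ K := Finsupp.onFinset (Finset.range (n+1))
    (fun l => if h : l < n+1 then g ⟨l, h⟩ else 0)
    (by
      intro l hl
      rw [Finset.mem_range]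
      by_contra hc
      simp only [dif_neg hc, ne_eq, not_true_eq_false] at hl) with hqdef
  have hqval : ∀ k : Fin (n+1), q (k : ℕ) = g k := by
    intro k
    simp only [hqdef, Finsupp.onFinset_apply]
    rw [dif_pos k.isLt]
  refine ⟨q, ?_, ?_⟩
  · intro h0
    apply hk0
    rw [← hqval k0, h0]
    rfl
  · have hsumeq : (q.sum fun l x => x • S^[l] f) = ∑ k : Fin (n+1), g k • S^[(k:ℕ)] f := by
      rw [Finsupp.sum_of_support_subset q (Finsupp.support_onFinset_subset)
        (fun l x => x • S^[l] f) (fun i _ => zero_smul K _)]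
      rw [← Fin.sum_univ_eq_sum_range (fun l => q l • S^[l] f) (n+1)]
      apply Finset.sum_congr rfl
      intro k _
      rw [hqval]
    have hker : mk (∑ k : Fin (n+1), g k • S^[(k:ℕ)] f) = 0 := by
      rw [map_sum]
      simp_rw [map_smul]
      exact hg0
    rw [hsumeq, ← Submodule.ker_mkQ V]
    exact LinearMap.mem_ker.mpr hker
end stage4

end JanetAux


/-!
STATEMENT 8: In the situation below, `pr(W_ind)` is a maximal `K⟨ρ⟩`-linearly
independent subset of `M`: (a) the family `(S^l (pr w))_{w ∈ W_ind, l ≥ 0}` is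
`K`-linearly independent, and (b) for every `f ∈ M` there is a nonzero
`q = Σ_l x_l ρ^l ∈ K⟨ρ⟩` with `q·f = Σ_l x_l S^l(f)` lying in the
`K⟨ρ⟩`-span of `pr(W_ind)`.
-/
theorem pr_Wind_maximal_independent
    {K : Type} [Field K] {d : ℕ} (γφ γρ : K →+* K)
    (hcomm : ∀ x : K, γφ (γρ x) = γρ (γφ x))
    {M : Type} [AddCommGroup M] [Module K M]
    -- `M` is a left `D`-module: `F` and `S` are the commuting semilinear actions
    -- of `φ` and `ρ` on `M`
    (F S : M →+ M)
    (hF : ∀ (x : K) (m : M), F (x • m) = γφ x • F m)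
    (hS : ∀ (x : K) (m : M), S (x • m) = γρ x • S m)
    (hFS : ∀ m : M, F (S m) = S (F m))
    -- `M` is free of rank `d` as `K⟨φ⟩`-module with basis `κ̄_1, …, κ̄_d`
    (κb : Fin d → M)
    (hli : LinearIndependent K fun p : Fin d × ℕ => F^[p.2] (κb p.1))
    (hsp : Submodule.span K (Set.range fun p : Fin d × ℕ => F^[p.2] (κb p.1)) = ⊤)
    -- the `ρ`-action on the basis is given by the matrix `D ∈ Mat_{d×d}(K⟨φ⟩)`
    (Dmat : Fin d → Fin d → (ℕ →₀ K))
    (hact : ∀ i, S (κb i) = ∑ j : Fin d, (Dmat i j).sum fun k x => x • F^[k] (κb j))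
    -- `J` is a Janet basis of `⟨p_1, …, p_d⟩`
    (J : JanetBasis γφ γρ d (DSpan γφ γρ (Set.range (pelt Dmat))))
    :
    LinearIndependent K
      (fun p : {w : Fr K d // w ∈ Wind γφ γρ J} × ℕ => S^[p.2] (pr F S κb p.1.1)) ∧
    ∀ f : M, ∃ q : ℕ →₀ K, q ≠ 0 ∧
      (q.sum fun l x => x • S^[l] f) ∈
        Submodule.span K
          {m : M | ∃ w ∈ Wind γφ γρ J, ∃ l : ℕ, m = S^[l] (pr F S κb w)} := by
  classical
  have hNker : ∀ {f : Fr K d}, f ∈ DSpan γφ γρ (Set.range (pelt Dmat)) →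
      JanetAux.prL F S κb f = 0 := fun hf =>
    JanetAux.N_le_ker γφ γρ F S κb hF hS hFS Dmat hact hf
  have hker : ∀ {f : Fr K d}, JanetAux.prL F S κb f = 0 →
      f ∈ DSpan γφ γρ (Set.range (pelt Dmat)) := fun hf =>
    JanetAux.mem_N_of_prL_eq_zero γφ γρ F S κb hF hS hFS Dmat hact hli hf
  have hmval : ∀ (i : Fin d) (n l : ℕ) (ix : Fin J.r), J.lmb ix = (i, n, l) →
      mVal γφ γρ J i ≤ (n : ℕ∞) := fun i n l ix h => sInf_le ⟨n, rfl, ix, l, h⟩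
  constructor
  · -- part (a)
    rw [linearIndependent_iff]
    intro c hc
    by_contra hc0
    have hW : ∀ p : {w : Fr K d // w ∈ Wind γφ γρ J} × ℕ,
        ∃ ij : Fin d × ℕ, ((ij.2 : ℕ∞) < mVal γφ γρ J ij.1) ∧
          (p.1 : Fr K d) = Finsupp.single (ij.1, ij.2, 0) 1 := by
      intro p
      obtain ⟨i, j, h1, h2⟩ := p.1.2
      exact ⟨(i, j), h1, h2⟩
    set eA : {w : Fr K d // w ∈ Wind γφ γρ J} × ℕ → MonIx d :=
      fun p => ((hW p).choose.1, (hW p).choose.2, p.2) with heA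
    have heA_lt : ∀ p, (((eA p).2.1 : ℕ∞)) < mVal γφ γρ J (eA p).1 := fun p =>
      (hW p).choose_spec.1
    have heA_single : ∀ p, (p.1 : Fr K d)
        = Finsupp.single ((hW p).choose.1, (hW p).choose.2, 0) 1 :=
      fun p => (hW p).choose_spec.2
    have heA_inj : Function.Injective eA := by
      intro p1 p2 h
      simp only [heA, Prod.mk.injEq] at h
      obtain ⟨h1, h2, h3⟩ := h
      have hw : (p1.1 : Fr K d) = (p2.1 : Fr K d) := by
        rw [heA_single p1, heA_single p2, h1, h2]
      exact Prod.ext (Subtype.ext hw) h3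
    have hfam : (fun p : {w : Fr K d // w ∈ Wind γφ γρ J} × ℕ => S^[p.2] (pr F S κb p.1.1))
        = (JanetAux.vfun F S κb) ∘ eA := by
      funext p
      show S^[p.2] (pr F S κb (p.1 : Fr K d)) = _
      rw [heA_single p, JanetAux.pr_eq, JanetAux.prL_single, one_smul]
      show S^[p.2] ((⇑F)^[(hW p).choose.2] ((⇑S)^[0] (κb (hW p).choose.1)))
          = (⇑F)^[(eA p).2.1] ((⇑S)^[(eA p).2.2] (κb (eA p).1))
      rw [← JanetAux.iter_iter_comm F S hFS]
      rfl
    have hpr : JanetAux.prL F S κb (Finsupp.mapDomain eA c) = 0 := by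
      have h1 : JanetAux.prL F S κb (Finsupp.mapDomain eA c)
          = Finsupp.linearCombination K (JanetAux.vfun F S κb ∘ eA) c :=
        Finsupp.linearCombination_mapDomain K (v' := JanetAux.vfun F S κb) eA c
      rw [h1, ← hfam]
      exact hc
    have hmemN : Finsupp.mapDomain eA c ∈ DSpan γφ γρ (Set.range (pelt Dmat)) := hker hpr
    have hne : Finsupp.mapDomain eA c ≠ 0 := by
      intro h0
      apply hc0
      apply Finsupp.mapDomain_injective heA_inj
      rw [h0, Finsupp.mapDomain_zero]
    obtain ⟨m, hm⟩ := JanetAux.exists_isLm hne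
    obtain ⟨ix, hcone⟩ := J.lm_cover _ hmemN hne m hm
    obtain ⟨a, b, -, -, hmeq⟩ := hcone
    have hm_in : m ∈ (Finsupp.mapDomain eA c).support := hm.1
    rw [Finsupp.mapDomain_support_of_injective heA_inj] at hm_in
    obtain ⟨p, hp, hpm⟩ := Finset.mem_image.mp hm_in
    have hlt : ((m.2.1 : ℕ∞)) < mVal γφ γρ J m.1 := by
      rw [← hpm]; exact heA_lt p
    have hle : mVal γφ γρ J m.1 ≤ ((J.lmb ix).2.1 : ℕ∞) := by
      apply hmval m.1 (J.lmb ix).2.1 (J.lmb ix).2.2 ix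
      rw [hmeq]
    have hle2 : ((J.lmb ix).2.1 : ℕ∞) ≤ (m.2.1 : ℕ∞) := by
      rw [hmeq]
      exact_mod_cast Nat.le_add_right _ a
    exact absurd hlt (not_lt.mpr (le_trans hle hle2))
  · -- part (b)
    set Vset := {m : M | ∃ w ∈ Wind γφ γρ J, ∃ l : ℕ, m = S^[l] (pr F S κb w)} with hVset
    set V := Submodule.span K Vset with hVdef
    set TM := JanetAux.TMod γρ S hS V with hTM
    have hVS : ∀ v ∈ V, S v ∈ V := by
      intro v hv
      induction hv using Submodule.span_induction with
      | mem x hx =>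
          obtain ⟨w, hw, l, rfl⟩ := hx
          exact Submodule.subset_span ⟨w, hw, l+1, (Function.iterate_succ_apply' _ _ _).symm⟩
      | zero => rw [map_zero]; exact Submodule.zero_mem _
      | add x y _ _ hx hy => rw [map_add]; exact Submodule.add_mem _ hx hy
      | smul a x _ hx => rw [hS]; exact Submodule.smul_mem _ _ hx
    have hTMiter : ∀ {f : M} (l : ℕ), f ∈ TM → S^[l] f ∈ TM := by
      intro f l hf
      exact JanetAux.TSet_S_iter S V hf l
    have hgen : ∀ (cc : ℕ) (j : ℕ) (i : Fin d), d - 1 - (i : ℕ) = cc →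
        F^[j] (κb i) ∈ TM := by
      intro cc
      induction cc using Nat.strong_induction_on with
      | _ cc ihc =>
        intro j
        induction j using Nat.strong_induction_on with
        | _ j ihj =>
          intro i hic
          by_cases hcase : (j : ℕ∞) < mVal γφ γρ J i
          · apply JanetAux.V_le_TSet S V hVS
            apply Submodule.subset_span
            refine ⟨Finsupp.single (i,j,0) 1, ⟨i, j, hcase, rfl⟩, 0, ?_⟩
            rw [JanetAux.pr_eq, JanetAux.prL_single, one_smul]
            rfl
          · push_neg at hcase
            have hex : ∃ n : ℕ, n ≤ j ∧ ∃ ix l, J.lmb ix = (i, n, l) := by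
              by_contra hno
              push_neg at hno
              have hgej : ((j+1 : ℕ) : ℕ∞) ≤ mVal γφ γρ J i := by
                apply le_sInf
                rintro cv ⟨n, rfl, ix, l, hl⟩
                have hnle : ¬ n ≤ j := fun hh => hno n hh ix l hl
                exact_mod_cast (by omega : j + 1 ≤ n)
              have hjlt : (j : ℕ∞) < mVal γφ γρ J i :=
                lt_of_lt_of_le (by exact_mod_cast Nat.lt_succ_self j) hgej
              exact absurd hjlt (not_lt.mpr hcase)
            obtain ⟨n, hnj, ix, l, hlmb⟩ := hex
            set g := (PhiMul γφ)^[j - n] (J.b ix) with hgdef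
            have hbN : J.b ix ∈ DSpan γφ γρ (Set.range (pelt Dmat)) := by
              have hb0 : J.b ix ∈ DSpan γφ γρ (Set.range J.b) :=
                JanetAux.self_mem_dspan γφ γρ ⟨ix, rfl⟩
              rwa [J.span_eq] at hb0
            have hgN : g ∈ DSpan γφ γρ (Set.range (pelt Dmat)) :=
              JanetAux.dspan_phiMul_iter_mem γφ γρ hbN (j - n)
            have hlm : IsLm g (i, j, l) := by
              have h1 := J.b_lm ix
              rw [hlmb] at h1
              have h2 := JanetAux.isLm_phiMul_iter γφ h1 (j - n)
              have h3 : n + (j - n) = j := by omega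
              simpa [h3] using h2
            have hcg : g (i, j, l) ≠ 0 := Finsupp.mem_support_iff.mp hlm.1
            have hprg : JanetAux.prL F S κb g = 0 := hNker hgN
            have heB_inj : Function.Injective (fun l' : ℕ => ((i, j, l') : MonIx d)) := by
              intro a b h
              simpa using h
            set q : ℕ →₀ K := Finsupp.comapDomain _ g heB_inj.injOn with hqdef
            have hq_ne : q ≠ 0 := by
              intro h0
              apply hcg
              have hql : q l = 0 := by rw [h0]; rfl
              exact hql
            set p : MonIx d → Prop := fun m => m.1 = i ∧ m.2.1 = j with hpdef
            have hfilter : g.filter p + g.filter (fun m => ¬ p m) = g :=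
              Finsupp.filter_pos_add_filter_neg g p
            have hmapq : Finsupp.mapDomain (fun l' : ℕ => ((i,j,l'):MonIx d)) q
                = g.filter p := by
              have hqeq : Finsupp.comapDomain (fun l' : ℕ => ((i,j,l'):MonIx d))
                  (g.filter p) heB_inj.injOn = q := by
                ext l'
                rw [Finsupp.comapDomain_apply, hqdef, Finsupp.comapDomain_apply,
                  Finsupp.filter_apply, if_pos ⟨rfl, rfl⟩]
              rw [← hqeq]
              apply Finsupp.mapDomain_comapDomain _ heB_inj
              intro m hm
              have hm' : m ∈ (g.filter p).support := hm
              rw [Finsupp.support_filter, Finset.mem_filter] at hm'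
              obtain ⟨-, hpm⟩ := hm'
              refine ⟨m.2.2, ?_⟩
              obtain ⟨m1, m2, m3⟩ := m
              obtain ⟨e1, e2⟩ := hpm
              dsimp at e1 e2 ⊢
              rw [e1, e2]
            have hqsum : (q.sum fun l' x => x • S^[l'] (F^[j] (κb i)))
                = JanetAux.prL F S κb (g.filter p) := by
              rw [← hmapq]
              have h1 : JanetAux.prL F S κb
                  (Finsupp.mapDomain (fun l' : ℕ => ((i,j,l'):MonIx d)) q)
                  = Finsupp.linearCombination K
                      (JanetAux.vfun F S κb ∘ (fun l' : ℕ => ((i,j,l'):MonIx d))) q :=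
                Finsupp.linearCombination_mapDomain K (v' := JanetAux.vfun F S κb) _ q
              rw [h1, Finsupp.linearCombination_apply]
              apply Finsupp.sum_congr
              intro l' _
              show (q l') • S^[l'] (F^[j] (κb i))
                  = (q l') • (⇑F)^[j] ((⇑S)^[l'] (κb i))
              rw [JanetAux.iter_iter_comm F S hFS]
            have hrest : JanetAux.prL F S κb (g.filter (fun m => ¬ p m)) ∈ TM := by
              have hexp : JanetAux.prL F S κb (g.filter (fun m => ¬ p m))
                  = ∑ m ∈ (g.filter (fun m => ¬ p m)).support,
                      (g.filter (fun m => ¬ p m)) m • JanetAux.vfun F S κb m := by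
                rw [JanetAux.prL, Finsupp.linearCombination_apply, Finsupp.sum]
              rw [hexp]
              apply Submodule.sum_mem
              intro m hmem
              have hmem' := hmem
              rw [Finsupp.support_filter, Finset.mem_filter] at hmem'
              obtain ⟨hmg, hnp⟩ := hmem'
              have hmne : m ≠ (i, j, l) := by
                intro h0
                apply hnp
                rw [h0]
                exact ⟨rfl, rfl⟩
              have hmlt : MLt m (i, j, l) := hlm.2 m hmg hmne
              apply Submodule.smul_mem
              have hvm : JanetAux.vfun F S κb m
                  = S^[m.2.2] ((⇑F)^[m.2.1] (κb m.1)) := by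
                show (⇑F)^[m.2.1] ((⇑S)^[m.2.2] (κb m.1)) = _
                rw [JanetAux.iter_iter_comm F S hFS]
              rw [hvm]
              apply hTMiter
              rcases hmlt with hlt1 | ⟨heq1, hlt2 | ⟨heq2, _⟩⟩
              · -- i < m.1
                apply ihc (d - 1 - (m.1 : ℕ)) ?_ m.2.1 m.1 rfl
                have hi : (i : ℕ) < d := i.isLt
                have hmi : (m.1 : ℕ) < d := m.1.isLt
                have : (i : ℕ) < (m.1 : ℕ) := hlt1
                omega
              · -- m.1 = i, m.2.1 < j
                apply ihj m.2.1 hlt2 m.1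
                rw [heq1]
                exact hic
              · -- m.1 = i, m.2.1 = j : contradicts ¬ p m
                exact absurd ⟨heq1, heq2⟩ hnp
            have hqTM : (q.sum fun l' x => x • S^[l'] (F^[j] (κb i))) ∈ TM := by
              rw [hqsum]
              have hsplit : JanetAux.prL F S κb (g.filter p)
                  = - JanetAux.prL F S κb (g.filter (fun m => ¬ p m)) := by
                have hadd := congrArg (JanetAux.prL F S κb) hfilter
                rw [map_add, hprg] at hadd
                exact eq_neg_of_add_eq_zero_left hadd
              rw [hsplit]
              exact Submodule.neg_mem _ hrest
            exact JanetAux.TSet_of_q γρ S V hS (F^[j] (κb i)) q hq_ne hqTM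
    intro f
    have hfT : f ∈ TM := by
      have htop : (⊤ : Submodule K M) ≤ TM := by
        rw [← hsp]
        apply Submodule.span_le.mpr
        rintro x ⟨pp, rfl⟩
        exact hgen (d - 1 - (pp.1 : ℕ)) pp.2 pp.1 rfl
      exact htop Submodule.mem_top
    obtain ⟨q, hq1, hq2⟩ := JanetAux.TSet_exists_q S V f hfT
    exact ⟨q, hq1, hq2⟩
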